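/- Let G be a finite group and M a G-module that is torsion as an abelian group. Then for any n ≥ 2, every n-cocycle of G with coefficients in M becomes a coboundary after pulling back along some surjection Γ → G where Γ is a finite group that is an extension of G by a finite abelian group. -/

import Mathlib

/-- The inhomogeneous group-cohomology coboundary operator, for a group `G`
acting on an abelian group `V` via `ρ`. -/
def dd {G V : Type*} [Group G] [AddCommGroup V] (ρ : G → V → V) {n : ℕ}
    (f : (Fin n → G) → V) : (Fin (n + 1) → G) → V :=
  fun g => ρ (g 0) (f fun i => g i.succ) +
    ∑ j : Fin (n + 1), ((-1 : ℤ) ^ (j.val + 1)) • f (j.contractNth (· * ·) g)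



set_option linter.unusedSectionVars false



section lemmas
variable {G Γ V W : Type*} [Group G] [Group Γ] [AddCommGroup V] [AddCommGroup W]

theorem dd_comp (ρV : G → V → V) (ρW : G → W → W) (φ : V →+ W)
    (hφ : ∀ g v, φ (ρV g v) = ρW g (φ v)) {n : ℕ} (f : (Fin n → G) → V) :
    (fun g => φ (dd ρV f g)) = dd ρW (fun g => φ (f g)) := by
  funext g
  simp only [dd, map_add, map_sum, map_zsmul, hφ]

theorem contractNth_comp (π : Γ →* G) {n : ℕ} (j : Fin (n + 1)) (g : Fin (n + 1) → Γ) :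
    (Fin.contractNth j (· * ·) fun i => π (g i)) = fun i => π (Fin.contractNth j (· * ·) g i) := by
  funext k
  rcases lt_trichotomy (k : ℕ) (j : ℕ) with h | h | h
  · rw [Fin.contractNth_apply_of_lt _ _ _ _ h, Fin.contractNth_apply_of_lt _ _ _ _ h]
  · rw [Fin.contractNth_apply_of_eq _ _ _ _ h, Fin.contractNth_apply_of_eq _ _ _ _ h, map_mul]
  · rw [Fin.contractNth_apply_of_gt _ _ _ _ h, Fin.contractNth_apply_of_gt _ _ _ _ h]

theorem dd_pullback (ρ : G → V → V) (π : Γ →* G) {n : ℕ} (f : (Fin n → G) → V) :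
    dd (fun γ v => ρ (π γ) v) (fun g => f fun i => π (g i))
      = fun g => dd ρ f fun i => π (g i) := by
  funext g
  simp only [dd, contractNth_comp]

theorem dd_sub (ρ : G → V → V) (hadd : ∀ g u v, ρ g (u + v) = ρ g u + ρ g v)
    {n : ℕ} (f f' : (Fin n → G) → V) :
    dd ρ (f - f') = dd ρ f - dd ρ f' := by
  funext g
  have h : ∀ g' u v, ρ g' (u - v) = ρ g' u - ρ g' v := fun g' =>
    (AddMonoidHom.mk' (ρ g') (hadd g')).map_sub
  simp only [dd, Pi.sub_apply, h, smul_sub, Finset.sum_sub_distrib]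
  abel

section ddd
variable {G V : Type} [Group G] [AddCommGroup V]

def toRepρ (G V : Type) [Group G] [AddCommGroup V] [DistribMulAction G V] :
    Representation ℤ G V where
  toFun := fun g =>
    { toFun := fun v => g • v
      map_add' := fun u v => smul_add g u v
      map_smul' := fun r v => (DistribMulAction.toAddMonoidHom V g).map_zsmul r v }
  map_one' := LinearMap.ext fun v => one_smul G v
  map_mul' := fun g h => LinearMap.ext fun v => mul_smul g h v

noncomputable def toRep (G V : Type) [Group G] [AddCommGroup V] [DistribMulAction G V] :
    Rep ℤ G :=
  Rep.of (toRepρ G V)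

theorem dd_dd' [DistribMulAction G V] {n : ℕ} (f : (Fin n → G) → V) :
    dd (fun (g : G) (m : V) => g • m) (dd (fun (g : G) (m : V) => g • m) f) = 0 := by
  have h := (groupCohomology.inhomogeneousCochains (toRep G V)).d_comp_d n (n + 1) (n + 2)
  rw [groupCohomology.inhomogeneousCochains.d_def, groupCohomology.inhomogeneousCochains.d_def]
    at h
  have h2 := LinearMap.ext_iff.1 (ModuleCat.hom_ext_iff.1 h) f
  funext g
  exact congrFun h2 g

theorem dd_dd (ρ : G → V → V) (h1 : ∀ v, ρ 1 v = v)
    (hmul : ∀ g h v, ρ (g * h) v = ρ g (ρ h v))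
    (hadd : ∀ g u v, ρ g (u + v) = ρ g u + ρ g v)
    {n : ℕ} (f : (Fin n → G) → V) : dd ρ (dd ρ f) = 0 := by
  have hzero : ∀ g, ρ g 0 = 0 := fun g =>
    (AddMonoidHom.mk' (ρ g) (hadd g)).map_zero
  letI : SMul G V := ⟨ρ⟩
  letI : MulAction G V := { one_smul := h1, mul_smul := hmul }
  letI : DistribMulAction G V := { smul_add := hadd, smul_zero := hzero }
  exact dd_dd' f

end ddd
end lemmas

section contract
variable {G : Type*} [Group G]

theorem contract_cons_zero {m : ℕ} (x : G) (g : Fin (m + 1) → G) :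
    Fin.contractNth 0 (· * ·) (Fin.cons x g) = Fin.cons (x * g 0) fun i => g i.succ := by
  funext t
  refine Fin.cases ?_ (fun s => ?_) t
  · rw [Fin.contractNth_apply_of_eq _ _ _ _ rfl]
    simp
  · rw [Fin.contractNth_apply_of_gt _ _ _ _ (by simp), Fin.cons_succ, Fin.cons_succ]

theorem contract_cons_succ {m : ℕ} (x : G) (g : Fin (m + 1) → G) (j : Fin (m + 1)) :
    Fin.contractNth j.succ (· * ·) (Fin.cons x g)
      = Fin.cons x (Fin.contractNth j (· * ·) g) := by
  funext t
  refine Fin.cases ?_ (fun s => ?_) t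
  · rw [Fin.contractNth_apply_of_lt _ _ _ _ (by simp)]
    simp
  · rw [Fin.cons_succ]
    rcases lt_trichotomy (s : ℕ) (j : ℕ) with h | h | h
    · rw [Fin.contractNth_apply_of_lt _ _ _ _ h,
        Fin.contractNth_apply_of_lt _ _ _ _ (by simpa using h),
        show (s.succ).castSucc = (s.castSucc).succ from rfl, Fin.cons_succ]
    · rw [Fin.contractNth_apply_of_eq _ _ _ _ h,
        Fin.contractNth_apply_of_eq _ _ _ _ (by simpa using h),
        show (s.succ).castSucc = (s.castSucc).succ from rfl, Fin.cons_succ, Fin.cons_succ]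
    · rw [Fin.contractNth_apply_of_gt _ _ _ _ h,
        Fin.contractNth_apply_of_gt _ _ _ _ (by simpa using h), Fin.cons_succ]
end contract

section coind
variable (G V : Type) [Group G] [AddCommGroup V] [DistribMulAction G V]

def CoInd : Type := G → V

instance : AddCommGroup (CoInd G V) := Pi.addCommGroup

instance : SMul G (CoInd G V) := ⟨fun g f x => f (x * g)⟩

theorem coInd_smul_apply (g : G) (f : CoInd G V) (x : G) : (g • f) x = f (x * g) := rfl

instance : DistribMulAction G (CoInd G V) where
  one_smul f := funext fun x => by rw [coInd_smul_apply, mul_one]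
  mul_smul g h f := funext fun x => by
    rw [coInd_smul_apply, coInd_smul_apply, coInd_smul_apply, mul_assoc]
  smul_add g f f' := rfl
  smul_zero g := rfl

instance [Finite G] [Finite V] : Finite (CoInd G V) := Pi.finite

variable {G V}

theorem coInd_add_apply (f f' : CoInd G V) (x : G) : (f + f') x = f x + f' x := rfl
theorem coInd_zero_apply (x : G) : (0 : CoInd G V) x = 0 := rfl
theorem coInd_zsmul_apply (c : ℤ) (f : CoInd G V) (x : G) : (c • f) x = c • f x := rfl
theorem coInd_sum_apply {ι : Type*} (s : Finset ι) (F : ι → CoInd G V) (x : G) :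
    (∑ i ∈ s, F i) x = ∑ i ∈ s, F i x := by
  classical
  induction s using Finset.induction_on with
  | empty => rfl
  | insert _ _ h ih => rw [Finset.sum_insert h, Finset.sum_insert h, coInd_add_apply, ih]

variable (G V)

def coIndι : V →+ CoInd G V where
  toFun v := fun x => x • v
  map_zero' := funext fun x => smul_zero x
  map_add' u v := funext fun x => smul_add x u v

theorem coIndι_apply (v : V) (x : G) : coIndι G V v x = x • v := rfl

theorem coIndι_equivariant (g : G) (v : V) : coIndι G V (g • v) = g • coIndι G V v :=
  funext fun x => by rw [coInd_smul_apply, coIndι_apply, coIndι_apply, mul_smul]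

theorem coIndι_injective : Function.Injective (coIndι G V) := fun u v h => by
  have := congrFun h 1
  rw [coIndι_apply, coIndι_apply, one_smul, one_smul] at this
  exact this

variable {G V}

/-- explicit contracting homotopy: every cocycle in the coinduced module is a coboundary -/
theorem coInd_vanish {k : ℕ} (f : (Fin (k + 1) → G) → CoInd G V)
    (hf : dd (fun (g : G) (m : CoInd G V) => g • m) f = 0) :
    ∃ h : (Fin k → G) → CoInd G V, dd (fun (g : G) (m : CoInd G V) => g • m) h = f := by
  refine ⟨fun g x => f (Fin.cons x g) 1, ?_⟩
  funext g
  funext x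
  have H := congrFun (congrFun hf (Fin.cons x g)) 1
  have hsign : ∀ j : ℕ, (-1 : ℤ) ^ (j + 1 + 1) = -((-1) ^ (j + 1)) := fun j => by ring
  simp only [dd, coInd_add_apply, coInd_sum_apply, coInd_zsmul_apply, coInd_smul_apply,
    Pi.zero_apply, coInd_zero_apply, Fin.cons_zero, Fin.cons_succ, one_mul] at H ⊢
  rw [Fin.sum_univ_succ] at H
  simp only [contract_cons_zero, contract_cons_succ, Fin.val_succ, Fin.val_zero, zero_add,
    pow_one, hsign, neg_smul, one_zsmul, neg_one_zsmul, Finset.sum_neg_distrib] at H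
  rw [← neg_add, ← sub_eq_add_neg] at H
  exact (sub_eq_zero.mp H).symm

section quot
variable (G V : Type) [Group G] [AddCommGroup V] [DistribMulAction G V]

def coN : AddSubgroup (CoInd G V) := (coIndι G V).range

abbrev CoQuot : Type := CoInd G V ⧸ coN G V

def coSmulHom (g : G) : CoInd G V →+ CoInd G V := DistribMulAction.toAddMonoidHom _ g

theorem coN_stable (g : G) : coN G V ≤ (coN G V).comap (coSmulHom G V g) := by
  rintro c ⟨v, rfl⟩
  exact ⟨g • v, by simpa [coSmulHom] using coIndι_equivariant G V g v⟩

instance : SMul G (CoQuot G V) :=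
  ⟨fun g => QuotientAddGroup.map _ _ (coSmulHom G V g) (coN_stable G V g)⟩

theorem coSmulHom_apply (g : G) (c : CoInd G V) : coSmulHom G V g c = g • c := rfl

theorem coQuot_smul_mk (g : G) (c : CoInd G V) :
    g • (QuotientAddGroup.mk' (coN G V) c : CoQuot G V)
      = QuotientAddGroup.mk' (coN G V) (g • c) :=
  QuotientAddGroup.map_mk' _ _ _ _ _

instance : DistribMulAction G (CoQuot G V) where
  one_smul q := by
    induction q using QuotientAddGroup.induction_on with
    | H c => rw [show ((c : CoInd G V ⧸ coN G V)) = QuotientAddGroup.mk' (coN G V) c from rfl,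
        coQuot_smul_mk, one_smul]

  mul_smul g h q := by
    induction q using QuotientAddGroup.induction_on with
    | H c => rw [show ((c : CoInd G V ⧸ coN G V)) = QuotientAddGroup.mk' (coN G V) c from rfl,
        coQuot_smul_mk, coQuot_smul_mk, coQuot_smul_mk, mul_smul]
  smul_add g q r := by
    induction q using QuotientAddGroup.induction_on with
    | H c =>
      induction r using QuotientAddGroup.induction_on with
      | H d =>
        rw [show ((c : CoInd G V ⧸ coN G V)) = QuotientAddGroup.mk' (coN G V) c from rfl,
          show ((d : CoInd G V ⧸ coN G V)) = QuotientAddGroup.mk' (coN G V) d from rfl,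
          ← map_add, coQuot_smul_mk, coQuot_smul_mk, coQuot_smul_mk, ← map_add, smul_add]
  smul_zero g := by
    rw [show ((0 : CoQuot G V)) = QuotientAddGroup.mk' (coN G V) 0 from (map_zero _).symm,
      coQuot_smul_mk, smul_zero]

def coq : CoInd G V →+ CoQuot G V := QuotientAddGroup.mk' (coN G V)

theorem coq_equivariant (g : G) (c : CoInd G V) : coq G V (g • c) = g • coq G V c :=
  (coQuot_smul_mk G V g c).symm

theorem coq_zero_iff (c : CoInd G V) : coq G V c = 0 ↔ c ∈ coN G V :=
  QuotientAddGroup.eq_zero_iff c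

theorem coq_comp_ι (v : V) : coq G V (coIndι G V v) = 0 :=
  (coq_zero_iff G V _).mpr ⟨v, rfl⟩
end quot

section base
variable {G V : Type} [Group G] [AddCommGroup V] [DistribMulAction G V]

theorem matrix_succ_two (g0 g1 g2 : G) :
    (fun i : Fin 2 => ![g0, g1, g2] i.succ) = ![g1, g2] := by
  funext t; fin_cases t <;> rfl

theorem contract3_0 (g0 g1 g2 : G) :
    Fin.contractNth (0 : Fin 3) (· * ·) ![g0, g1, g2] = ![g0 * g1, g2] := by
  funext t; fin_cases t
  · rw [Fin.contractNth_apply_of_eq _ _ _ _ rfl]; rfl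
  · rw [Fin.contractNth_apply_of_gt _ _ _ _ (by norm_num)]; rfl

theorem contract3_1 (g0 g1 g2 : G) :
    Fin.contractNth (1 : Fin 3) (· * ·) ![g0, g1, g2] = ![g0, g1 * g2] := by
  funext t; fin_cases t
  · rw [Fin.contractNth_apply_of_lt _ _ _ _ (by norm_num)]; rfl
  · rw [Fin.contractNth_apply_of_eq _ _ _ _ rfl]; rfl

theorem contract3_2 (g0 g1 g2 : G) :
    Fin.contractNth (2 : Fin 3) (· * ·) ![g0, g1, g2] = ![g0, g1] := by
  funext t; fin_cases t
  · rw [Fin.contractNth_apply_of_lt _ _ _ _ (by norm_num)]; rfl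
  · rw [Fin.contractNth_apply_of_lt _ _ _ _ (by norm_num)]; rfl

theorem cocycle_cond (σ : (Fin 2 → G) → V) (hσ : dd (fun (g : G) (m : V) => g • m) σ = 0)
    (g0 g1 g2 : G) :
    g0 • σ ![g1, g2] + σ ![g0, g1 * g2] = σ ![g0 * g1, g2] + σ ![g0, g1] := by
  have H := congrFun hσ ![g0, g1, g2]
  simp only [dd, Pi.zero_apply, matrix_succ_two] at H
  rw [Fin.sum_univ_succ, Fin.sum_univ_two,
    show Fin.succ (0 : Fin 2) = (1 : Fin 3) from rfl,
    show Fin.succ (1 : Fin 2) = (2 : Fin 3) from rfl] at H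
  rw [show ((0 : Fin 3).contractNth (· * ·) ![g0, g1, g2]) = ![g0 * g1, g2] from
      contract3_0 g0 g1 g2,
    show ((1 : Fin 3).contractNth (· * ·) ![g0, g1, g2]) = ![g0, g1 * g2] from
      contract3_1 g0 g1 g2,
    show ((2 : Fin 3).contractNth (· * ·) ![g0, g1, g2]) = ![g0, g1] from
      contract3_2 g0 g1 g2] at H
  norm_num [pow_succ] at H
  rw [← sub_eq_zero]
  rw [show g0 • σ ![g1, g2] + σ ![g0, g1 * g2] - (σ ![g0 * g1, g2] + σ ![g0, g1])
    = g0 • σ ![g1, g2] + (-σ ![g0 * g1, g2] + (σ ![g0, g1 * g2] + -σ ![g0, g1])) by abel]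
  exact H
end base

section basecase
variable {G V : Type} [Group G] [Finite G] [AddCommGroup V] [Finite V] [DistribMulAction G V]

theorem base_case (σ : (Fin 2 → G) → V) (hσ : dd (fun (g : G) (m : V) => g • m) σ = 0) :
    ∃ (Γ : Type) (_ : Group Γ) (_ : Finite Γ) (π : Γ →* G),
      Function.Surjective π ∧ (∀ a b : π.ker, a * b = b * a) ∧
      ∃ α : (Fin 1 → Γ) → V,
        (fun g : Fin 2 → Γ => σ fun i => π (g i)) = dd (fun (γ : Γ) (m : V) => π γ • m) α := by
  classical
  set σ' : G → G → V := fun g h => σ ![g, h] with hσ'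
  have hc : ∀ g0 g1 g2 : G, g0 • σ' g1 g2 + σ' g0 (g1 * g2) = σ' (g0 * g1) g2 + σ' g0 g1 :=
    fun g0 g1 g2 => cocycle_cond σ hσ g0 g1 g2
  have h1h : ∀ h : G, σ' 1 h = σ' 1 1 := by
    intro h
    have := hc 1 1 h
    rw [one_smul, one_mul, one_mul] at this
    exact add_left_cancel this
  have hg1 : ∀ g : G, g • σ' 1 1 = σ' g 1 := by
    intro g
    have := hc g 1 1
    rw [mul_one, mul_one] at this
    exact add_right_cancel this
  letI : Mul (V × G) := ⟨fun p q => (p.1 + p.2 • q.1 + σ' p.2 q.2, p.2 * q.2)⟩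
  letI : One (V × G) := ⟨(-σ' 1 1, 1)⟩
  letI : Inv (V × G) := ⟨fun p => (-σ' 1 1 - σ' p.2⁻¹ p.2 - p.2⁻¹ • p.1, p.2⁻¹)⟩
  have hmul : ∀ p q : V × G, p * q = (p.1 + p.2 • q.1 + σ' p.2 q.2, p.2 * q.2) := fun _ _ => rfl
  letI grp : Group (V × G) :=
    { mul_assoc := by
        rintro ⟨a, g⟩ ⟨b, h⟩ ⟨c, k⟩
        rw [hmul, hmul, hmul, hmul]
        refine Prod.ext ?_ (mul_assoc g h k)
        show a + g • b + σ' g h + (g * h) • c + σ' (g * h) k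
          = a + g • (b + h • c + σ' h k) + σ' g (h * k)
        rw [mul_smul, smul_add, smul_add,
          eq_sub_of_add_eq (hc g h k).symm]
        abel
      one_mul := by
        rintro ⟨b, h⟩
        rw [hmul]
        refine Prod.ext ?_ (one_mul h)
        show -σ' 1 1 + (1 : G) • b + σ' 1 h = b
        rw [one_smul, h1h h]
        abel
      mul_one := by
        rintro ⟨a, g⟩
        rw [hmul]
        refine Prod.ext ?_ (mul_one g)
        show a + g • (-σ' 1 1) + σ' g 1 = a
        rw [smul_neg, hg1 g]
        abel
      inv_mul_cancel := by
        rintro ⟨a, g⟩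
        rw [hmul]
        refine Prod.ext ?_ (inv_mul_cancel g)
        show -σ' 1 1 - σ' g⁻¹ g - g⁻¹ • a + g⁻¹ • a + σ' g⁻¹ g = -σ' 1 1
        abel }
  refine ⟨V × G, grp, inferInstance,
    { toFun := Prod.snd, map_one' := rfl, map_mul' := fun _ _ => rfl }, fun g => ⟨(0, g), rfl⟩,
    ?_, ?_⟩
  · rintro ⟨⟨a, ga⟩, ha⟩ ⟨⟨b, gb⟩, hb⟩
    have ha' : ga = 1 := ha
    have hb' : gb = 1 := hb
    subst ha' hb'
    refine Subtype.ext ?_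
    rw [Subgroup.coe_mul, Subgroup.coe_mul, hmul, hmul]
    refine Prod.ext ?_ rfl
    show a + (1 : G) • b + σ' 1 1 = b + (1 : G) • a + σ' 1 1
    rw [one_smul, one_smul, add_comm a b]
  · refine ⟨fun t => -(t 0).1, ?_⟩
    funext g
    show σ (fun i => (g i).2) = _
    have hmat : (fun i => (g i).2) = ![(g 0).2, (g 1).2] := by
      funext t; fin_cases t <;> rfl
    simp only [dd, Fin.sum_univ_succ, Fin.sum_univ_one]
    rw [hmat,
      show ((0 : Fin 2).contractNth (· * ·) g) 0 = g 0 * g 1 from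
        Fin.contractNth_apply_of_eq _ _ _ _ rfl,
      show ((Fin.succ 0 : Fin 2).contractNth (· * ·) g) 0 = g 0 from
        Fin.contractNth_apply_of_lt _ _ _ _ (by norm_num)]
    simp only [Finset.univ_eq_empty, Finset.sum_empty, add_zero, Fin.val_succ, Fin.val_zero,
      zero_add, pow_one, pow_succ, mul_neg, mul_one, neg_neg, neg_smul, one_zsmul, neg_one_zsmul,
      one_smul, smul_neg, Fin.succ_zero_eq_one, MonoidHom.coe_mk, OneHom.coe_mk,
      show ((1 : Fin 2) : ℕ) = 1 from rfl]
    rw [show ((g 0 * g 1).1 : V) = (g 0).1 + (g 0).2 • (g 1).1 + σ' (g 0).2 (g 1).2 by rw [hmul]]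
    rw [show σ ![(g 0).2, (g 1).2] = σ' (g 0).2 (g 1).2 from rfl]
    abel
end basecase


theorem main_lemma (G : Type) [Group G] [Finite G] (n : ℕ) :
    ∀ (V : Type) [AddCommGroup V] [DistribMulAction G V] [Finite V]
      (ω : (Fin (n + 2) → G) → V), dd (fun (g : G) (m : V) => g • m) ω = 0 →
    ∃ (Γ : Type) (_ : Group Γ) (_ : Finite Γ) (π : Γ →* G),
      Function.Surjective π ∧ (∀ a b : π.ker, a * b = b * a) ∧
      ∃ α : (Fin (n + 1) → Γ) → V,
        (fun g : Fin (n + 2) → Γ => ω fun i => π (g i)) =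
          dd (fun (γ : Γ) (m : V) => π γ • m) α := by
  induction n with
  | zero => intro V _ _ _ ω hω; exact base_case ω hω
  | succ n IH =>
    intro V _ _ _ ω hω
    -- push the cocycle into the coinduced module
    have hιω : dd (fun (g : G) (m : CoInd G V) => g • m) (fun t => coIndι G V (ω t)) = 0 := by
      rw [← dd_comp (fun (g : G) (m : V) => g • m) _ (coIndι G V)
        (fun g v => coIndι_equivariant G V g v) ω]
      funext t
      rw [congrFun hω t]
      simp
    obtain ⟨β, hβ⟩ := coInd_vanish (k := n + 2) (fun t => coIndι G V (ω t)) hιω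
    -- project to the quotient
    have hωQ : dd (fun (g : G) (m : CoQuot G V) => g • m) (fun t => coq G V (β t)) = 0 := by
      rw [← dd_comp (fun (g : G) (m : CoInd G V) => g • m) _ (coq G V)
        (fun g c => (coq_equivariant G V g c)) β]
      funext t
      rw [congrFun hβ t]
      exact coq_comp_ι G V (ω t)
    obtain ⟨Γ, iΓ, fΓ, π, hsurj, hker, αQ, hαQ⟩ := IH (CoQuot G V) (fun t => coq G V (β t)) hωQ
    refine ⟨Γ, iΓ, fΓ, π, hsurj, hker, ?_⟩
    choose lift hlift using fun t : Fin (n + 1) → Γ =>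
      QuotientAddGroup.mk'_surjective (coN G V) (αQ t)
    set δ : (Fin (n + 2) → Γ) → CoInd G V :=
      (fun t => β fun i => π (t i)) - dd (fun (γ : Γ) (m : CoInd G V) => π γ • m) lift with hδ
    have hδq : ∀ t, coq G V (δ t) = 0 := by
      intro t
      have h1 : (fun t : Fin (n + 2) → Γ => coq G V
          (dd (fun (γ : Γ) (m : CoInd G V) => π γ • m) lift t))
          = dd (fun (γ : Γ) (m : CoQuot G V) => π γ • m) (fun t => coq G V (lift t)) :=
        dd_comp _ _ (coq G V) (fun γ c => coq_equivariant G V (π γ) c) lift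
      have h2 : (fun t => coq G V (lift t)) = αQ := funext fun t => hlift t
      rw [hδ]
      simp only [Pi.sub_apply, map_sub]
      rw [congrFun h1 t, h2, ← congrFun hαQ t]
      simp
    have hδι : ∀ t, coIndι G V (δ t 1) = δ t := by
      intro t
      obtain ⟨v, hv⟩ := (coq_zero_iff G V (δ t)).mp (hδq t)
      rw [← hv, coIndι_apply, one_smul]
    refine ⟨fun t => δ t 1, ?_⟩
    funext t
    apply coIndι_injective G V
    have e1 : (fun t : Fin (n + 2 + 1) → Γ => coIndι G V
        (dd (fun (γ : Γ) (m : V) => π γ • m) (fun t => δ t 1) t))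
        = dd (fun (γ : Γ) (m : CoInd G V) => π γ • m) (fun t => coIndι G V (δ t 1)) :=
      dd_comp _ _ (coIndι G V) (fun γ v => coIndι_equivariant G V (π γ) v) _
    have e2 : (fun t : Fin (n + 2) → Γ => coIndι G V (δ t 1)) = δ := funext hδι
    rw [congrFun e1 t, e2, hδ,
      dd_sub (fun (γ : Γ) (m : CoInd G V) => π γ • m) (fun γ u v => smul_add (π γ) u v),
      dd_dd (fun (γ : Γ) (m : CoInd G V) => π γ • m)
        (fun v => by simp) (fun g h v => by simp [mul_smul]) (fun γ u v => smul_add (π γ) u v)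
        lift]
    rw [sub_zero, congrFun (dd_pullback (fun (g : G) (m : CoInd G V) => g • m) π β) t,
      congrFun hβ fun i => π (t i)]

/-- if `M` is torsion as an abelian group, every `n`-cocycle of the finite
group `G` in `M` (`n = n' + 2 ≥ 2`) becomes a coboundary after pulling back along some
surjection `Γ → G` with `Γ` a finite extension of `G` by a finite abelian kernel. -/
theorem stmt1 {G M : Type*} [Group G] [Finite G] [AddCommGroup M] [DistribMulAction G M]
    (htors : ∀ m : M, ∃ k : ℕ, 0 < k ∧ k • m = 0)
    (n : ℕ) (ω : (Fin (n + 2) → G) → M)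
    (hω : dd (fun (g : G) (m : M) => g • m) ω = 0) :
    ∃ (Γ : Type) (_ : Group Γ) (_ : Finite Γ) (π : Γ →* G),
      Function.Surjective π ∧
      (∀ a b : π.ker, a * b = b * a) ∧
      ∃ α : (Fin (n + 1) → Γ) → M,
        (fun g : Fin (n + 2) → Γ => ω fun i => π (g i)) =
          dd (fun (γ : Γ) (m : M) => π γ • m) α := by
  classical
  -- the G-submodule of M generated by the (finitely many, torsion) values of ω
  set S : Set M := Set.range (fun p : G × (Fin (n + 2) → G) => p.1 • ω p.2) with hS
  have hSfin : S.Finite := Set.finite_range _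
  set A : AddSubgroup M := AddSubgroup.closure S with hA
  have hAfg : AddGroup.FG ↥A := by
    rw [AddGroup.fg_iff_addSubgroup_fg]
    exact ⟨hSfin.toFinset, by rw [Set.Finite.coe_toFinset]⟩
  have hAtors : AddMonoid.IsTorsion ↥A := by
    intro a
    obtain ⟨k, hk, hka⟩ := htors (a : M)
    rw [isOfFinAddOrder_iff_nsmul_eq_zero]
    exact ⟨k, hk, by ext; push_cast; simpa using hka⟩
  haveI : Finite ↥A := AddCommGroup.finite_of_fg_torsion ↥A hAtors
  have hstab : ∀ (g : G) (m : M), m ∈ A → g • m ∈ A := by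
    intro g m hm
    induction hm using AddSubgroup.closure_induction with
    | mem x hx =>
      obtain ⟨⟨g', t⟩, rfl⟩ := hx
      exact AddSubgroup.subset_closure ⟨(g * g', t), mul_smul g g' (ω t)⟩
    | zero => simpa using A.zero_mem
    | add x y _ _ hx hy => rw [smul_add]; exact A.add_mem hx hy
    | neg x _ hx => rw [smul_neg]; exact A.neg_mem hx
  letI : SMul G ↥A := ⟨fun g a => ⟨g • (a : M), hstab g a a.2⟩⟩
  have hAsmul : ∀ (g : G) (a : ↥A), ((g • a : ↥A) : M) = g • (a : M) := fun _ _ => rfl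
  letI : DistribMulAction G ↥A :=
    { one_smul := fun a => Subtype.ext (by rw [hAsmul, one_smul])
      mul_smul := fun g h a => Subtype.ext (by rw [hAsmul, hAsmul, hAsmul, mul_smul])
      smul_add := fun g a b => Subtype.ext
        (by rw [hAsmul]; push_cast; rw [hAsmul, hAsmul, smul_add])
      smul_zero := fun g => Subtype.ext (by rw [hAsmul]; push_cast; rw [smul_zero]) }
  set ωA : (Fin (n + 2) → G) → ↥A := fun t =>
    ⟨ω t, AddSubgroup.subset_closure ⟨(1, t), one_smul G (ω t)⟩⟩ with hωA
  have hωA0 : dd (fun (g : G) (m : ↥A) => g • m) ωA = 0 := by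
    funext t
    refine Subtype.ext ?_
    have h1 : (fun t : Fin (n + 2 + 1) → G => (A.subtype) (dd (fun (g : G) (m : ↥A) => g • m) ωA t))
        = dd (fun (g : G) (m : M) => g • m) (fun t => (A.subtype) (ωA t)) :=
      dd_comp _ _ A.subtype (fun g a => rfl) ωA
    have h2 : (fun t => (A.subtype) (ωA t)) = ω := rfl
    rw [h2] at h1
    calc ((dd (fun (g : G) (m : ↥A) => g • m) ωA t : ↥A) : M)
        = dd (fun (g : G) (m : M) => g • m) ω t := congrFun h1 t
      _ = 0 := congrFun hω t
  -- shrink everything to `Type 0`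
  let G₀ : Type := Shrink.{0} G
  let e : G₀ ≃* G := Shrink.mulEquiv
  let V₀ : Type := Shrink.{0} ↥A
  let eV : V₀ ≃+ ↥A := Shrink.addEquiv
  haveI : Finite G₀ := Finite.of_equiv G e.toEquiv.symm
  haveI : Finite V₀ := Finite.of_equiv ↥A eV.toEquiv.symm
  letI : SMul G₀ V₀ := ⟨fun g v => eV.symm (e g • eV v)⟩
  have h₀smul : ∀ (g : G₀) (v : V₀), eV (g • v) = e g • eV v := fun g v => by
    show eV (eV.symm (e g • eV v)) = _
    rw [AddEquiv.apply_symm_apply]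
  letI : DistribMulAction G₀ V₀ :=
    { one_smul := fun v => eV.injective (by rw [h₀smul, map_one, one_smul])
      mul_smul := fun g h v => eV.injective (by rw [h₀smul, map_mul, mul_smul, h₀smul, h₀smul])
      smul_add := fun g u v => eV.injective (by rw [h₀smul, map_add, map_add, h₀smul, h₀smul, smul_add])
      smul_zero := fun g => eV.injective (by rw [h₀smul, map_zero, smul_zero]) }
  set ω₀ : (Fin (n + 2) → G₀) → V₀ := fun t => eV.symm (ωA fun i => e (t i)) with hω₀def
  have hω₀ : dd (fun (g : G₀) (m : V₀) => g • m) ω₀ = 0 := by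
    funext t
    apply eV.injective
    have h1 : (fun t : Fin (n + 2 + 1) → G₀ => eV (dd (fun (g : G₀) (m : V₀) => g • m) ω₀ t))
        = dd (fun (g : G₀) (a : ↥A) => e.toMonoidHom g • a) (fun t => eV (ω₀ t)) :=
      dd_comp _ _ eV.toAddMonoidHom (fun g v => h₀smul g v) ω₀
    have h2 : (fun t : Fin (n + 2) → G₀ => eV (ω₀ t)) = fun t => ωA fun i => e.toMonoidHom (t i) := by
      funext t
      rw [hω₀def, AddEquiv.apply_symm_apply]
      rfl
    have h3 := dd_pullback (fun (g : G) (a : ↥A) => g • a) e.toMonoidHom ωA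
    rw [congrFun h1 t, h2, congrFun h3 t, congrFun hωA0 fun i => e.toMonoidHom (t i)]
    simp
  obtain ⟨Γ, iΓ, fΓ, π₀, hsurj, hker, α₀, hα₀⟩ := main_lemma G₀ n V₀ ω₀ hω₀
  refine ⟨Γ, iΓ, fΓ, e.toMonoidHom.comp π₀, e.surjective.comp hsurj, ?_, ?_⟩
  · rintro ⟨a, ha⟩ ⟨b, hb⟩
    have ha' : a ∈ π₀.ker := by
      rw [MonoidHom.mem_ker] at ha ⊢
      exact e.injective (by rw [map_one]; exact ha)
    have hb' : b ∈ π₀.ker := by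
      rw [MonoidHom.mem_ker] at hb ⊢
      exact e.injective (by rw [map_one]; exact hb)
    have h2 := congrArg Subtype.val (hker ⟨a, ha'⟩ ⟨b, hb'⟩)
    rw [Subgroup.coe_mul, Subgroup.coe_mul] at h2
    exact Subtype.ext (by rw [Subgroup.coe_mul, Subgroup.coe_mul]; exact h2)
  · set φ : V₀ →+ M := A.subtype.comp eV.toAddMonoidHom with hφ
    have hφs : ∀ (γ : Γ) (v : V₀), φ (π₀ γ • v) = (e.toMonoidHom.comp π₀) γ • φ v := by
      intro γ v
      show ((eV (π₀ γ • v) : ↥A) : M) = _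
      rw [h₀smul]
      rfl
    refine ⟨fun t => φ (α₀ t), ?_⟩
    funext t
    have h1 : (fun t : Fin (n + 1 + 1) → Γ => φ (dd (fun (γ : Γ) (m : V₀) => π₀ γ • m) α₀ t))
        = dd (fun (γ : Γ) (m : M) => (e.toMonoidHom.comp π₀) γ • m) (fun t => φ (α₀ t)) :=
      dd_comp _ _ φ hφs α₀
    rw [← congrFun h1 t, ← congrFun hα₀ t]
    show _ = ((eV (eV.symm (ωA fun i => e (π₀ (t i)))) : ↥A) : M)
    rw [AddEquiv.apply_symm_apply]
    rfl
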